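/- arXiv:2005.11320 — 2 statements merged into one kernel-verified Lean document; each statement's English description precedes it below -/
import Mathlib

section
/- Cut set outage formula (Theorem, post-contingency form): under a cut set outage handled by proportional control, the branch flow changes on the surviving lines satisfy f̃_{−F} − f_{−F} = K^F f_F + Σ_{ℓ̂∈F_tie} f_ℓ̂ Σ_{k∈N} α_k D̂^F (e_k − e_{j(ℓ̂)}), where K^F := B_{−F} C_{−F}^T A_{−F} C_F is the generalized line outage distribution factor matrix and D̂^F := B_{−F} C_{−F}^T A_{−F} is the power transfer distribution factor matrix of the post-contingency network. -/
open Matrix MeasureTheory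

variable {n m : ℕ}

/-- Incidence matrix of an oriented network with buses `Fin (n+1)` (bus `Fin.last n` is the
reference bus) and oriented lines indexed by `Fin m` with endpoint maps `src`, `tgt`. -/
def incM (src tgt : Fin m → Fin (n+1)) : Matrix (Fin (n+1)) (Fin m) ℝ :=
  Matrix.of fun i l => if src l = i then 1 else if tgt l = i then -1 else 0

/-- The matrix `A` built from a Laplacian `L`: its top-left `n × n` block is the inverse of the
reduced Laplacian (obtained by deleting the last row and column) and all other entries are `0`. -/
noncomputable def AmatL (L : Matrix (Fin (n+1)) (Fin (n+1)) ℝ) : Matrix (Fin (n+1)) (Fin (n+1)) ℝ :=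
  Matrix.of fun i j =>
    if h : i ≠ Fin.last n ∧ j ≠ Fin.last n then
      (L.submatrix Fin.castSucc Fin.castSucc)⁻¹ (i.castPred h.1) (j.castPred h.2)
    else 0

/-- The matrix `A` of the network with susceptance vector `b`. -/
noncomputable def Amat (src tgt : Fin m → Fin (n+1)) (b : Fin m → ℝ) : Matrix (Fin (n+1)) (Fin (n+1)) ℝ :=
  AmatL (incM src tgt * Matrix.diagonal b * (incM src tgt)ᵀ)

/-- Power transfer distribution factor `D_{l, k ĵ}`. -/
noncomputable def ptdf (src tgt : Fin m → Fin (n+1)) (b : Fin m → ℝ) (l : Fin m) (k jh : Fin (n+1)) : ℝ :=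
  b l * (Amat src tgt b (src l) k + Amat src tgt b (tgt l) jh
       - Amat src tgt b (src l) jh - Amat src tgt b (tgt l) k)

/-- The underlying simple graph of the network. -/
def netGraph (src tgt : Fin m → Fin (n+1)) : SimpleGraph (Fin (n+1)) :=
  SimpleGraph.fromRel fun a c => ∃ l, src l = a ∧ tgt l = c

/-- There is a simple path in the network from `jh` to `k` that contains line `l`. -/
def PathThrough (src tgt : Fin m → Fin (n+1)) (jh k : Fin (n+1)) (l : Fin m) : Prop :=
  ∃ w : (netGraph src tgt).Walk jh k, w.IsPath ∧ s(src l, tgt l) ∈ w.edges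

/-- Lines `e₁` and `e₂` belong to the same block: they are equal or lie on a common simple cycle. -/
def sameBlock (src tgt : Fin m → Fin (n+1)) (e₁ e₂ : Fin m) : Prop :=
  e₁ = e₂ ∨ ∃ (v : Fin (n+1)) (c : (netGraph src tgt).Walk v v),
    c.IsCycle ∧ s(src e₁, tgt e₁) ∈ c.edges ∧ s(src e₂, tgt e₂) ∈ c.edges

/-- A cut vertex: a vertex whose removal disconnects the graph. -/
def IsCutVertex {V : Type*} (G : SimpleGraph V) (v : V) : Prop :=
  ¬ (G.induce {w : V | w ≠ v}).Connected

/-- The subgraph of the network with only the lines in `S`. -/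
def netGraphOn (src tgt : Fin m → Fin (n+1)) (S : Set (Fin m)) : SimpleGraph (Fin (n+1)) :=
  SimpleGraph.fromRel fun a c => ∃ l ∈ S, src l = a ∧ tgt l = c

def maskIn (F : Finset (Fin m)) (b : Fin m → ℝ) : Fin m → ℝ := fun l => if l ∈ F then b l else 0
def maskOut (F : Finset (Fin m)) (b : Fin m → ℝ) : Fin m → ℝ := fun l => if l ∈ F then 0 else b l

/-- Column submatrix `C_F` (columns outside `F` zeroed out). -/
def CFmat (src tgt : Fin m → Fin (n+1)) (F : Finset (Fin m)) : Matrix (Fin (n+1)) (Fin m) ℝ :=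
  Matrix.of fun i l => if l ∈ F then incM src tgt i l else 0

/-- Column submatrix `C_{−F}` (columns in `F` zeroed out). -/
def CmFmat (src tgt : Fin m → Fin (n+1)) (F : Finset (Fin m)) : Matrix (Fin (n+1)) (Fin m) ℝ :=
  Matrix.of fun i l => if l ∈ F then 0 else incM src tgt i l

/-- Diagonal susceptance matrix `B_F`. -/
def BFmat (b : Fin m → ℝ) (F : Finset (Fin m)) : Matrix (Fin m) (Fin m) ℝ :=
  Matrix.diagonal (maskIn F b)

/-- Diagonal susceptance matrix `B_{−F}`. -/
def BmFmat (b : Fin m → ℝ) (F : Finset (Fin m)) : Matrix (Fin m) (Fin m) ℝ :=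
  Matrix.diagonal (maskOut F b)

/-- The matrix `A_{−F}` of the post-contingency network `(N, E ∖ F)`. -/
noncomputable def AmFmat (src tgt : Fin m → Fin (n+1)) (b : Fin m → ℝ) (F : Finset (Fin m)) :
    Matrix (Fin (n+1)) (Fin (n+1)) ℝ :=
  AmatL (CmFmat src tgt F * BmFmat b F * (CmFmat src tgt F)ᵀ)

/-- The `k`-th standard unit vector of `ℝ^{n+1}`. -/
def evec (k : Fin (n+1)) : Fin (n+1) → ℝ := Pi.single k 1

section AuxLemmas

variable {n m : ℕ}

lemma incM_transpose_mulVec (src tgt : Fin m → Fin (n+1)) (hsl : ∀ l, src l ≠ tgt l)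
    (x : Fin (n+1) → ℝ) (l : Fin m) :
    (incM src tgt)ᵀ.mulVec x l = x (src l) - x (tgt l) := by
  have h : ∀ i, (incM src tgt)ᵀ l i * x i
      = (if src l = i then x i else 0) + (if tgt l = i then -x i else 0) := by
    intro i
    rcases eq_or_ne (src l) i with h1 | h1
    · rcases eq_or_ne (tgt l) i with h2 | h2
      · exact absurd (h1.trans h2.symm) (hsl l)
      · simp [incM, Matrix.transpose_apply, h1, h2]
    · rcases eq_or_ne (tgt l) i with h2 | h2 <;>
        simp [incM, Matrix.transpose_apply, h1, h2]
  simp only [Matrix.mulVec, dotProduct, h, Finset.sum_add_distrib,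
    Finset.sum_ite_eq, Finset.mem_univ, if_true]
  ring

lemma CmF_transpose_mulVec (src tgt : Fin m → Fin (n+1)) (hsl : ∀ l, src l ≠ tgt l)
    (F : Finset (Fin m)) (x : Fin (n+1) → ℝ) {l : Fin m} (hl : l ∉ F) :
    (CmFmat src tgt F)ᵀ.mulVec x l = x (src l) - x (tgt l) := by
  rw [← incM_transpose_mulVec src tgt hsl x l]
  simp [Matrix.mulVec, dotProduct, CmFmat, hl]

lemma CmF_transpose_mulVec_mem (src tgt : Fin m → Fin (n+1))
    (F : Finset (Fin m)) (x : Fin (n+1) → ℝ) {l : Fin m} (hl : l ∈ F) :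
    (CmFmat src tgt F)ᵀ.mulVec x l = 0 := by
  simp [Matrix.mulVec, dotProduct, CmFmat, hl]

lemma CF_transpose_mulVec (src tgt : Fin m → Fin (n+1)) (hsl : ∀ l, src l ≠ tgt l)
    (F : Finset (Fin m)) (x : Fin (n+1) → ℝ) {l : Fin m} (hl : l ∈ F) :
    (CFmat src tgt F)ᵀ.mulVec x l = x (src l) - x (tgt l) := by
  rw [← incM_transpose_mulVec src tgt hsl x l]
  simp [Matrix.mulVec, dotProduct, CFmat, hl]

lemma BmF_CmF_mulVec (src tgt : Fin m → Fin (n+1)) (hsl : ∀ l, src l ≠ tgt l)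
    (b : Fin m → ℝ) (F : Finset (Fin m)) (x : Fin (n+1) → ℝ) (l : Fin m) :
    (BmFmat b F * (CmFmat src tgt F)ᵀ).mulVec x l
      = if l ∈ F then 0 else b l * (x (src l) - x (tgt l)) := by
  rw [← Matrix.mulVec_mulVec, BmFmat, Matrix.mulVec_diagonal]
  by_cases hl : l ∈ F
  · simp [maskOut, hl]
  · simp [maskOut, hl, CmF_transpose_mulVec src tgt hsl F x hl]

lemma lap_rowsum (src tgt : Fin m → Fin (n+1)) (hsl : ∀ l, src l ≠ tgt l)
    (b : Fin m → ℝ) (F : Finset (Fin m)) (c : ℝ) :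
    (CmFmat src tgt F * BmFmat b F * (CmFmat src tgt F)ᵀ).mulVec (fun _ => c) = 0 := by
  rw [Matrix.mul_assoc, ← Matrix.mulVec_mulVec]
  have h : (BmFmat b F * (CmFmat src tgt F)ᵀ).mulVec (fun _ => c) = 0 := by
    funext l
    rw [BmF_CmF_mulVec src tgt hsl b F _ l]
    by_cases hl : l ∈ F <;> simp [hl]
  rw [h, Matrix.mulVec_zero]

lemma lap_split (src tgt : Fin m → Fin (n+1)) (b : Fin m → ℝ) (F : Finset (Fin m)) :
    incM src tgt * Matrix.diagonal b * (incM src tgt)ᵀ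
      = CmFmat src tgt F * BmFmat b F * (CmFmat src tgt F)ᵀ
        + CFmat src tgt F * BFmat b F * (CFmat src tgt F)ᵀ := by
  have key : ∀ (X Y : Matrix (Fin (n+1)) (Fin m) ℝ) (d : Fin m → ℝ) (i j : Fin (n+1)),
      (X * Matrix.diagonal d * Yᵀ) i j = ∑ l, X i l * d l * Y j l := by
    intro X Y d i j
    rw [Matrix.mul_apply]
    simp [Matrix.mul_diagonal, Matrix.transpose_apply]
  ext i j
  rw [Matrix.add_apply, key, BmFmat, BFmat, key, key, ← Finset.sum_add_distrib]
  refine Finset.sum_congr rfl fun l _ => ?_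
  by_cases hl : l ∈ F <;> simp [CmFmat, CFmat, maskIn, maskOut, hl]

end AuxLemmas
section AuxLemmas2

variable {n m : ℕ}

lemma reduced_det_isUnit (src tgt : Fin m → Fin (n+1)) (hsl : ∀ l, src l ≠ tgt l)
    (b : Fin m → ℝ) (hb : ∀ l, 0 < b l) (F : Finset (Fin m))
    (hconnPost : (netGraphOn src tgt {l | l ∉ F}).Connected) :
    IsUnit ((CmFmat src tgt F * BmFmat b F * (CmFmat src tgt F)ᵀ).submatrix
      Fin.castSucc Fin.castSucc).det := by
  rw [← Matrix.isUnit_iff_isUnit_det, ← Matrix.mulVec_injective_iff_isUnit]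
  have key : ∀ xbar, ((CmFmat src tgt F * BmFmat b F * (CmFmat src tgt F)ᵀ).submatrix
      Fin.castSucc Fin.castSucc).mulVec xbar = 0 → xbar = 0 := by
    intro xbar hx
    set L := CmFmat src tgt F * BmFmat b F * (CmFmat src tgt F)ᵀ with hL
    set x : Fin (n+1) → ℝ :=
      fun i => if h : i = Fin.last n then 0 else xbar (i.castPred h) with hxdef
    have hxlast : x (Fin.last n) = 0 := by simp [hxdef]
    have hxcast : ∀ i : Fin n, x (Fin.castSucc i) = xbar i := by
      intro i
      simp [hxdef, (Fin.castSucc_lt_last i).ne, Fin.castPred_castSucc]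
    have hLx : ∀ i : Fin n, L.mulVec x (Fin.castSucc i) = 0 := by
      intro i
      have h0 := congrFun hx i
      simp only [Matrix.mulVec, dotProduct, Matrix.submatrix_apply, Pi.zero_apply] at h0
      simp only [Matrix.mulVec, dotProduct]
      rw [Fin.sum_univ_castSucc]
      simp only [hxcast, hxlast, mul_zero, add_zero]
      exact h0
    have hd : x ⬝ᵥ L.mulVec x = 0 := by
      rw [dotProduct]
      apply Finset.sum_eq_zero
      intro i _
      rcases eq_or_ne i (Fin.last n) with h | h
      · rw [h, hxlast, zero_mul]
      · obtain ⟨i', rfl⟩ := Fin.exists_castSucc_eq.mpr h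
        rw [hLx, mul_zero]
    have hform : x ⬝ᵥ L.mulVec x
        = ∑ l, maskOut F b l * ((CmFmat src tgt F)ᵀ.mulVec x l)^2 := by
      rw [hL, Matrix.mul_assoc, ← Matrix.mulVec_mulVec, Matrix.dotProduct_mulVec,
        ← Matrix.mulVec_transpose, ← Matrix.mulVec_mulVec]
      simp only [BmFmat, dotProduct, Matrix.mulVec_diagonal]
      exact Finset.sum_congr rfl fun l _ => by ring
    have hzero : ∀ l ∈ (Finset.univ : Finset (Fin m)),
        maskOut F b l * ((CmFmat src tgt F)ᵀ.mulVec x l)^2 = 0 := by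
      rw [← Finset.sum_eq_zero_iff_of_nonneg]
      · rw [← hform, hd]
      · intro l _
        apply mul_nonneg _ (sq_nonneg _)
        by_cases hl : l ∈ F <;> simp [maskOut, hl, (hb l).le]
    have hw0 : ∀ l, l ∉ F → x (src l) = x (tgt l) := by
      intro l hl
      have h0 := hzero l (Finset.mem_univ l)
      rw [CmF_transpose_mulVec src tgt hsl F x hl] at h0
      have hbl : maskOut F b l ≠ 0 := by simp [maskOut, hl, (hb l).ne']
      have := (mul_eq_zero.mp h0).resolve_left hbl
      have := pow_eq_zero_iff (n := 2) (by norm_num) |>.mp this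
      linarith [sub_eq_zero.mp this]
    have hwalkeq : ∀ (u v : Fin (n+1))
        (wlk : (netGraphOn src tgt {l | l ∉ F}).Walk u v), x u = x v := by
      intro u v wlk
      induction wlk with
      | nil => rfl
      | cons hadj q ih =>
        rename_i a c d
        have huv : x a = x c := by
          rw [netGraphOn, SimpleGraph.fromRel_adj] at hadj
          rcases hadj.2 with ⟨l, hl, h1, h2⟩ | ⟨l, hl, h1, h2⟩
          · rw [← h1, ← h2]; exact hw0 l hl
          · rw [← h1, ← h2]; exact (hw0 l hl).symm
        rw [huv]; exact ih
    funext i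
    obtain ⟨wlk⟩ := hconnPost.preconnected (Fin.castSucc i) (Fin.last n)
    have := hwalkeq _ _ wlk
    rw [hxcast, hxlast] at this
    exact this
  intro y z hyz
  have := key (y - z) (by rw [Matrix.mulVec_sub, hyz, sub_self])
  exact sub_eq_zero.mp this

end AuxLemmas2
section AuxLemmas3

variable {n m : ℕ}

lemma AL_mulVec (src tgt : Fin m → Fin (n+1)) (hsl : ∀ l, src l ≠ tgt l)
    (b : Fin m → ℝ) (hb : ∀ l, 0 < b l) (F : Finset (Fin m))
    (hconnPost : (netGraphOn src tgt {l | l ∉ F}).Connected) (w : Fin (n+1) → ℝ) :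
    (AmFmat src tgt b F).mulVec
        ((CmFmat src tgt F * BmFmat b F * (CmFmat src tgt F)ᵀ).mulVec w)
      = fun i => w i - w (Fin.last n) := by
  set L := CmFmat src tgt F * BmFmat b F * (CmFmat src tgt F)ᵀ with hLdef
  set Lbar := L.submatrix Fin.castSucc Fin.castSucc with hLbar
  have hdet := reduced_det_isUnit src tgt hsl b hb F hconnPost
  set u := L.mulVec w with hu
  set y : Fin n → ℝ := fun k => w (Fin.castSucc k) - w (Fin.last n) with hy
  have hucast : ∀ j : Fin n, u (Fin.castSucc j) = Lbar.mulVec y j := by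
    intro j
    have h0 := congrFun (lap_rowsum src tgt hsl b F (w (Fin.last n))) (Fin.castSucc j)
    simp only [Matrix.mulVec, dotProduct, Pi.zero_apply, ← hLdef] at h0
    have hstep : u (Fin.castSucc j) = ∑ k, L (Fin.castSucc j) k * (w k - w (Fin.last n)) := by
      simp only [hu, Matrix.mulVec, dotProduct, mul_sub, Finset.sum_sub_distrib, h0, sub_zero]
    rw [hstep, Fin.sum_univ_castSucc]
    simp only [sub_self, mul_zero, add_zero]
    simp [Matrix.mulVec, dotProduct, hLbar, Matrix.submatrix_apply, hy]
  have hAlastrow : ∀ j, AmFmat src tgt b F (Fin.last n) j = 0 := by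
    intro j; simp [AmFmat, AmatL]
  have hAcast : ∀ i j : Fin n,
      AmFmat src tgt b F (Fin.castSucc i) (Fin.castSucc j) = Lbar⁻¹ i j := by
    intro i j
    simp [AmFmat, AmatL, (Fin.castSucc_lt_last i).ne, (Fin.castSucc_lt_last j).ne,
      Fin.castPred_castSucc, hLbar, hLdef]
  have hAlastcol : ∀ i : Fin n,
      AmFmat src tgt b F (Fin.castSucc i) (Fin.last n) = 0 := by
    intro i; simp [AmFmat, AmatL]
  have hinv : Lbar⁻¹ * Lbar = 1 := Matrix.nonsing_inv_mul _ hdet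
  funext i
  rcases eq_or_ne i (Fin.last n) with h | h
  · subst h
    simp [Matrix.mulVec, dotProduct, hAlastrow]
  · obtain ⟨i', rfl⟩ := Fin.exists_castSucc_eq.mpr h
    have : (AmFmat src tgt b F).mulVec u (Fin.castSucc i')
        = ∑ j : Fin n, Lbar⁻¹ i' j * u (Fin.castSucc j) := by
      rw [Matrix.mulVec, dotProduct, Fin.sum_univ_castSucc, hAlastcol, zero_mul, add_zero]
      exact Finset.sum_congr rfl fun j _ => by rw [hAcast]
    rw [this]
    have : ∑ j : Fin n, Lbar⁻¹ i' j * u (Fin.castSucc j)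
        = (Lbar⁻¹.mulVec (Lbar.mulVec y)) i' := by
      rw [Matrix.mulVec, dotProduct]
      exact Finset.sum_congr rfl fun j _ => by rw [hucast j]
    rw [this, Matrix.mulVec_mulVec, hinv, Matrix.one_mulVec]

end AuxLemmas3
/-- cut set outage formula, post-contingency form. Under a cut set outage
(tripped internal lines `F` and tripped tie lines indexed by `ι`, with endpoints `jmap` and
pre-contingency flows `ftie`) handled by proportional control `α`, the branch flow changes on
the surviving lines satisfy
`f̃_{−F} − f_{−F} = K^F f_F + ∑_{ℓ̂ ∈ F_tie} f_ℓ̂ ∑_k α_k D̂^F (e_k − e_{j(ℓ̂)})`,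
where `K^F = B_{−F} C_{−F}ᵀ A_{−F} C_F` and `D̂^F = B_{−F} C_{−F}ᵀ A_{−F}`. -/
theorem cutset_outage_formula
    {n m : ℕ} (src tgt : Fin m → Fin (n+1)) (hsl : ∀ l, src l ≠ tgt l)
    (b : Fin m → ℝ) (hb : ∀ l, 0 < b l)
    (F : Finset (Fin m))
    (hconnPre : (netGraph src tgt).Connected)
    (hconnPost : (netGraphOn src tgt {l | l ∉ F}).Connected)
    (α : Fin (n+1) → ℝ) (hα0 : ∀ k, 0 ≤ α k) (hα1 : ∑ k, α k = 1)
    (ι : Type) [Fintype ι] (jmap : ι → Fin (n+1)) (ftie : ι → ℝ) (hftie : ∀ t, ftie t ≠ 0)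
    (p θ θt : Fin (n+1) → ℝ) (f ft : Fin m → ℝ)
    (hpre1 : (incM src tgt).mulVec f = p + ∑ t, ftie t • evec (jmap t))
    (hpre2 : f = (Matrix.diagonal b * (incM src tgt)ᵀ).mulVec θ)
    (hpost1 : (CmFmat src tgt F).mulVec ft = p + (∑ t, ftie t) • ∑ k, α k • evec k)
    (hpost2 : ft = (BmFmat b F * (CmFmat src tgt F)ᵀ).mulVec θt) :
    ∀ l ∉ F,
      ft l - f l =
        (BmFmat b F * (CmFmat src tgt F)ᵀ * AmFmat src tgt b F * CFmat src tgt F).mulVec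
          (maskIn F f) l
        + ∑ t, ftie t * ∑ k, α k *
            (BmFmat b F * (CmFmat src tgt F)ᵀ * AmFmat src tgt b F).mulVec
              (evec k - evec (jmap t)) l := by
  intro l hl
  have f_entry : ∀ l', f l' = b l' * (θ (src l') - θ (tgt l')) := by
    intro l'
    rw [hpre2, ← Matrix.mulVec_mulVec, Matrix.mulVec_diagonal,
      incM_transpose_mulVec src tgt hsl θ l']
  set A := AmFmat src tgt b F with hA
  set N := BmFmat b F * (CmFmat src tgt F)ᵀ * A with hN
  set L := CmFmat src tgt F * BmFmat b F * (CmFmat src tgt F)ᵀ with hLdef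
  set Δ : Fin (n+1) → ℝ := fun i => θt i - θ i with hΔ
  have hBF : (BFmat b F * (CFmat src tgt F)ᵀ).mulVec θ = maskIn F f := by
    funext l'
    rw [← Matrix.mulVec_mulVec, BFmat, Matrix.mulVec_diagonal]
    by_cases h : l' ∈ F
    · simp only [maskIn, h, if_true]
      rw [CF_transpose_mulVec src tgt hsl F θ h]
      exact (f_entry l').symm
    · simp [maskIn, h]
  have hLθt : L.mulVec θt = p + (∑ t, ftie t) • ∑ k, α k • evec k := by
    rw [← hpost1, hpost2, Matrix.mulVec_mulVec, hLdef, Matrix.mul_assoc]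
  have hLθ : L.mulVec θ = (p + ∑ t, ftie t • evec (jmap t))
      - (CFmat src tgt F).mulVec (maskIn F f) := by
    have h1 : (incM src tgt).mulVec f
        = L.mulVec θ + (CFmat src tgt F).mulVec (maskIn F f) := by
      conv_lhs => rw [hpre2, Matrix.mulVec_mulVec, ← Matrix.mul_assoc,
        lap_split src tgt b F, Matrix.add_mulVec]
      rw [hLdef]
      congr 1
      rw [Matrix.mul_assoc, ← Matrix.mulVec_mulVec, hBF]
    rw [← hpre1, h1]
    abel
  have hkey : ∀ t : ι, (∑ k, α k • (evec k - evec (jmap t)) : Fin (n+1) → ℝ)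
      = (∑ k, α k • evec k) - evec (jmap t) := by
    intro t
    simp only [smul_sub, Finset.sum_sub_distrib, ← Finset.sum_smul, hα1, one_smul]
  have hLΔ : L.mulVec Δ = (CFmat src tgt F).mulVec (maskIn F f)
      + ∑ t, ftie t • ∑ k, α k • (evec k - evec (jmap t)) := by
    have hΔsub : L.mulVec Δ = L.mulVec θt - L.mulVec θ := by
      rw [← Matrix.mulVec_sub]
      congr 1
    rw [hΔsub, hLθt, hLθ]
    simp only [hkey, smul_sub, Finset.sum_sub_distrib, ← Finset.sum_smul, hα1, one_smul]
    abel
  have hAL := AL_mulVec src tgt hsl b hb F hconnPost Δ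
  have hentry : ∀ x : Fin (n+1) → ℝ,
      (BmFmat b F * (CmFmat src tgt F)ᵀ).mulVec x l = b l * (x (src l) - x (tgt l)) := by
    intro x; rw [BmF_CmF_mulVec src tgt hsl b F x l, if_neg hl]
  have hft : ft l = b l * (θt (src l) - θt (tgt l)) := by
    rw [hpost2]; exact hentry θt
  set v := (CFmat src tgt F).mulVec (maskIn F f)
      + ∑ t, ftie t • ∑ k, α k • (evec k - evec (jmap t)) with hv
  have hNsplit : ∀ z, N.mulVec z
      = (BmFmat b F * (CmFmat src tgt F)ᵀ).mulVec (A.mulVec z) := by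
    intro z; rw [hN, ← Matrix.mulVec_mulVec]
  have hNv : N.mulVec v l = ft l - f l := by
    rw [hNsplit, ← hLΔ, hAL, hentry, hft, f_entry l]
    simp only [hΔ]
    ring
  have hmulsum : ∀ {κ : Type} [inst : Fintype κ] (g : κ → Fin (n+1) → ℝ),
      N.mulVec (∑ t, g t) = ∑ t, N.mulVec (g t) := by
    intro κ _ g
    exact map_sum N.mulVecLin g Finset.univ
  have h2 : ∀ t : ι, N.mulVec (∑ k, α k • (evec k - evec (jmap t))) l
      = ∑ k, α k * N.mulVec (evec k - evec (jmap t)) l := by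
    intro t
    rw [hmulsum]
    simp [Matrix.mulVec_smul, Finset.sum_apply]
  have h3 : N.mulVec (∑ t, ftie t • ∑ k, α k • (evec k - evec (jmap t))) l
      = ∑ t, ftie t * N.mulVec (∑ k, α k • (evec k - evec (jmap t))) l := by
    rw [hmulsum]
    simp [Matrix.mulVec_smul, Finset.sum_apply]
  calc ft l - f l = N.mulVec v l := hNv.symm
    _ = N.mulVec ((CFmat src tgt F).mulVec (maskIn F f)) l
        + N.mulVec (∑ t, ftie t • ∑ k, α k • (evec k - evec (jmap t))) l := by
      rw [hv, Matrix.mulVec_add]; rfl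
    _ = (N * CFmat src tgt F).mulVec (maskIn F f) l
        + ∑ t, ftie t * ∑ k, α k * N.mulVec (evec k - evec (jmap t)) l := by
      rw [Matrix.mulVec_mulVec, h3]
      congr 1
      exact Finset.sum_congr rfl fun t _ => by rw [h2]
end

section
/- Woodbury relation between pre- and post-contingency matrices: if the matrix I − B_F C_F^T A C_F is invertible, then A_{−F} = A + A C_F (I − B_F C_F^T A C_F)^{−1} B_F C_F^T A. -/
open Matrix MeasureTheory

variable {n m : ℕ}

/-! ### Auxiliary material for the Woodbury theorem -/

/-- The `n × (n+1)` "deletion of the last coordinate" matrix. -/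
def Emat (n : ℕ) : Matrix (Fin n) (Fin (n+1)) ℝ :=
  (1 : Matrix (Fin (n+1)) (Fin (n+1)) ℝ).submatrix Fin.castSucc id

lemma Emat_mul {n : ℕ} {β : Type*} [Fintype β] (M : Matrix (Fin (n+1)) β ℝ) :
    Emat n * M = M.submatrix Fin.castSucc id := by
  have h := Matrix.submatrix_mul (1 : Matrix (Fin (n+1)) (Fin (n+1)) ℝ) M
    Fin.castSucc (id : Fin (n+1) → Fin (n+1)) (id : β → β) Function.bijective_id
  simpa [Emat] using h.symm

lemma Emat_transpose {n : ℕ} :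
    (Emat n)ᵀ = (1 : Matrix (Fin (n+1)) (Fin (n+1)) ℝ).submatrix id Fin.castSucc := by
  simp [Emat, Matrix.transpose_submatrix]

lemma mul_Emat_transpose {n : ℕ} {β : Type*} [Fintype β] (M : Matrix β (Fin (n+1)) ℝ) :
    M * (Emat n)ᵀ = M.submatrix id Fin.castSucc := by
  have h := Matrix.submatrix_mul M (1 : Matrix (Fin (n+1)) (Fin (n+1)) ℝ)
    (id : β → β) (id : Fin (n+1) → Fin (n+1)) Fin.castSucc Function.bijective_id
  rw [Emat_transpose]
  simpa using h.symm

lemma Emat_sandwich {n : ℕ} (M : Matrix (Fin (n+1)) (Fin (n+1)) ℝ) :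
    Emat n * M * (Emat n)ᵀ = M.submatrix Fin.castSucc Fin.castSucc := by
  rw [Emat_mul, mul_Emat_transpose, Matrix.submatrix_submatrix]
  rfl

lemma AmatL_eq {n : ℕ} (L : Matrix (Fin (n+1)) (Fin (n+1)) ℝ) :
    AmatL L = (Emat n)ᵀ * (L.submatrix Fin.castSucc Fin.castSucc)⁻¹ * Emat n := by
  set X := (L.submatrix Fin.castSucc Fin.castSucc)⁻¹ with hX
  ext i j
  by_cases hi : i = Fin.last n
  · subst hi
    simp [AmatL, Matrix.mul_apply, Emat, Matrix.one_apply,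
      fun k : Fin n => (Fin.castSucc_lt_last k).ne,
      fun k : Fin n => (Fin.castSucc_lt_last k).ne']
  · by_cases hj : j = Fin.last n
    · subst hj
      simp [AmatL, Matrix.mul_apply, Emat, Matrix.one_apply,
        fun k : Fin n => (Fin.castSucc_lt_last k).ne,
      fun k : Fin n => (Fin.castSucc_lt_last k).ne']
    · obtain ⟨i', rfl⟩ : ∃ i', Fin.castSucc i' = i := ⟨i.castPred hi, Fin.castSucc_castPred i hi⟩
      obtain ⟨j', rfl⟩ : ∃ j', Fin.castSucc j' = j := ⟨j.castPred hj, Fin.castSucc_castPred j hj⟩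
      simp [AmatL, Matrix.mul_apply, Emat, Matrix.one_apply, Fin.castSucc_inj, hi, hj, hX]

lemma reducedLap_isUnit {n m : ℕ} (src tgt : Fin m → Fin (n+1)) (hsl : ∀ l, src l ≠ tgt l)
    (b : Fin m → ℝ) (hb : ∀ l, 0 < b l) (hconn : (netGraph src tgt).Connected) :
    IsUnit ((incM src tgt * Matrix.diagonal b * (incM src tgt)ᵀ).submatrix
      Fin.castSucc Fin.castSucc).det := by
  set C := incM src tgt with hCdef
  set L := C * Matrix.diagonal b * Cᵀ with hL
  rw [isUnit_iff_ne_zero]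
  intro hdet
  obtain ⟨v, hv0, hv⟩ := Matrix.exists_mulVec_eq_zero_iff.mpr hdet
  set ve : Fin (n+1) → ℝ := fun i => if h : i = Fin.last n then 0 else v (i.castPred h) with hve
  have hveC : ∀ i : Fin n, ve i.castSucc = v i := by
    intro i; simp [hve, (Fin.castSucc_lt_last i).ne]
  have hvel : ve (Fin.last n) = 0 := by simp [hve]
  have hLve : ∀ i : Fin n, (L *ᵥ ve) i.castSucc = 0 := by
    intro i
    calc (L *ᵥ ve) i.castSucc = ∑ j : Fin (n+1), L i.castSucc j * ve j := by
          simp [Matrix.mulVec, dotProduct]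
      _ = (∑ j : Fin n, L i.castSucc j.castSucc * ve j.castSucc)
            + L i.castSucc (Fin.last n) * ve (Fin.last n) := Fin.sum_univ_castSucc _
      _ = ∑ j : Fin n, (L.submatrix Fin.castSucc Fin.castSucc) i j * v j := by
          simp [hveC, hvel]
      _ = 0 := congrFun hv i
  have hq : ve ⬝ᵥ (L *ᵥ ve) = 0 := by
    rw [dotProduct, Fin.sum_univ_castSucc]
    simp [hLve, hvel]
  have hq2 : ve ⬝ᵥ (L *ᵥ ve) = ∑ l, b l * ((ve ᵥ* C) l)^2 := by
    rw [hL, ← Matrix.mulVec_mulVec, ← Matrix.mulVec_mulVec, Matrix.dotProduct_mulVec,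
      Matrix.mulVec_transpose, dotProduct]
    refine Finset.sum_congr rfl fun l _ => ?_
    rw [Matrix.mulVec_diagonal]
    ring
  have hy0 : ∀ l, (ve ᵥ* C) l = 0 := by
    have hsum : ∑ l, b l * ((ve ᵥ* C) l)^2 = 0 := hq2.symm.trans hq
    intro l
    have hterm := (Finset.sum_eq_zero_iff_of_nonneg
      (fun l _ => mul_nonneg (hb l).le (sq_nonneg _))).mp hsum l (Finset.mem_univ l)
    have hbl := (hb l).ne'
    have : ((ve ᵥ* C) l)^2 = 0 := by
      rcases mul_eq_zero.mp hterm with h | h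
      · exact absurd h hbl
      · exact h
    exact pow_eq_zero_iff (by norm_num) |>.mp this
  have hsrc : ∀ l, ve (src l) = ve (tgt l) := by
    intro l
    have h0 := hy0 l
    have hexp : (ve ᵥ* C) l = ∑ i, ve i * C i l := by
      simp [Matrix.vecMul, dotProduct]
    have hcol : ∀ i, ve i * C i l =
        (if i = src l then ve (src l) else 0) - (if i = tgt l then ve (tgt l) else 0) := by
      intro i
      rcases eq_or_ne i (src l) with h1 | h1
      · have h2 : ¬ i = tgt l := by rw [h1]; exact hsl l
        simp [hCdef, incM, h1, hsl l]
      · rcases eq_or_ne i (tgt l) with h2 | h2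
        · simp [hCdef, incM, h2, hsl l, (hsl l).symm]
        · have h1' : ¬ src l = i := fun h => h1 h.symm
          have h2' : ¬ tgt l = i := fun h => h2 h.symm
          simp [hCdef, incM, h1', h2', h1, h2]
    rw [hexp] at h0
    rw [Finset.sum_congr rfl (fun i _ => hcol i), Finset.sum_sub_distrib] at h0
    simp only [Finset.sum_ite_eq', Finset.mem_univ, if_true] at h0
    linarith
  have hadj : ∀ a c, (netGraph src tgt).Adj a c → ve a = ve c := by
    intro a c h
    rw [netGraph, SimpleGraph.fromRel_adj] at h
    obtain ⟨-, h | h⟩ := h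
    · obtain ⟨l, rfl, rfl⟩ := h; exact hsrc l
    · obtain ⟨l, rfl, rfl⟩ := h; exact (hsrc l).symm
  have hwalk : ∀ {a c : Fin (n+1)}, (netGraph src tgt).Walk a c → ve a = ve c := by
    intro a c w
    induction w with
    | nil => rfl
    | cons h p ih => exact (hadj _ _ h).trans ih
  have hve0 : ∀ i, ve i = 0 := fun i =>
    (hconn.preconnected i (Fin.last n)).elim fun w => (hwalk w).trans hvel
  exact hv0 (funext fun i => by rw [← hveC i, hve0]; rfl)

lemma LmF_split {n m : ℕ} (src tgt : Fin m → Fin (n+1)) (b : Fin m → ℝ) (F : Finset (Fin m)) :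
    CmFmat src tgt F * BmFmat b F * (CmFmat src tgt F)ᵀ
      = incM src tgt * Matrix.diagonal b * (incM src tgt)ᵀ
        - CFmat src tgt F * BFmat b F * (CFmat src tgt F)ᵀ := by
  ext i j
  rw [Matrix.sub_apply, Matrix.mul_apply, Matrix.mul_apply, Matrix.mul_apply,
    ← Finset.sum_sub_distrib]
  refine Finset.sum_congr rfl fun l _ => ?_
  rw [BFmat, BmFmat, Matrix.mul_diagonal, Matrix.mul_diagonal, Matrix.mul_diagonal]
  by_cases hl : l ∈ F <;>
    simp [CFmat, CmFmat, maskIn, maskOut, hl, Matrix.transpose_apply]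

lemma woodbury_core {n m : ℕ} (R : Matrix (Fin n) (Fin n) ℝ) (Cr : Matrix (Fin n) (Fin m) ℝ)
    (BF W : Matrix (Fin m) (Fin m) ℝ)
    (hR : R * R⁻¹ = 1) (hW : W * W⁻¹ = 1)
    (hS : BF * Crᵀ * R⁻¹ * Cr = 1 - W) :
    (R - Cr * BF * Crᵀ)⁻¹ = R⁻¹ + R⁻¹ * Cr * W⁻¹ * BF * Crᵀ * R⁻¹ := by
  apply Matrix.inv_eq_right_inv
  have h5 : Cr * BF * Crᵀ * R⁻¹ * Cr * W⁻¹ = Cr * W⁻¹ - Cr := by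
    have e : Cr * BF * Crᵀ * R⁻¹ * Cr = Cr * (BF * Crᵀ * R⁻¹ * Cr) := by
      simp only [Matrix.mul_assoc]
    rw [e, hS, Matrix.mul_sub, Matrix.mul_one, Matrix.sub_mul, Matrix.mul_assoc, hW,
      Matrix.mul_one]
  have expand : (R - Cr * BF * Crᵀ) * (R⁻¹ + R⁻¹ * Cr * W⁻¹ * BF * Crᵀ * R⁻¹)
      = 1 + Cr * W⁻¹ * BF * Crᵀ * R⁻¹ - Cr * BF * Crᵀ * R⁻¹
        - Cr * BF * Crᵀ * R⁻¹ * Cr * W⁻¹ * BF * Crᵀ * R⁻¹ := by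
    simp only [Matrix.sub_mul, Matrix.mul_add, ← Matrix.mul_assoc, hR, Matrix.one_mul]
    abel
  rw [expand, h5]
  simp only [Matrix.sub_mul]
  abel

/-- Woodbury relation between pre- and post-contingency matrices.
If `I − B_F C_Fᵀ A C_F` is invertible, then
`A_{−F} = A + A C_F (I − B_F C_Fᵀ A C_F)⁻¹ B_F C_Fᵀ A`. -/
theorem woodbury_pre_post_contingency
    {n m : ℕ} (src tgt : Fin m → Fin (n+1)) (hsl : ∀ l, src l ≠ tgt l)
    (b : Fin m → ℝ) (hb : ∀ l, 0 < b l)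
    (F : Finset (Fin m))
    (hconnPre : (netGraph src tgt).Connected)
    (hconnPost : (netGraphOn src tgt {l | l ∉ F}).Connected)
    (hinv : IsUnit (1 - BFmat b F * (CFmat src tgt F)ᵀ * Amat src tgt b * CFmat src tgt F)) :
    AmFmat src tgt b F =
      Amat src tgt b + Amat src tgt b * CFmat src tgt F *
        (1 - BFmat b F * (CFmat src tgt F)ᵀ * Amat src tgt b * CFmat src tgt F)⁻¹ *
        BFmat b F * (CFmat src tgt F)ᵀ * Amat src tgt b := by
  classical
  set C := incM src tgt with hCdef
  set CF := CFmat src tgt F with hCFdef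
  set BF := BFmat b F with hBFdef
  set A := Amat src tgt b with hAdef
  set R := ((C * Matrix.diagonal b * Cᵀ).submatrix Fin.castSucc Fin.castSucc) with hRdef
  have hA : A = (Emat n)ᵀ * R⁻¹ * Emat n := AmatL_eq _
  have hRu : IsUnit R.det := reducedLap_isUnit src tgt hsl b hb hconnPre
  have hR1 : R * R⁻¹ = 1 := Matrix.mul_nonsing_inv _ hRu
  set W := 1 - BF * CFᵀ * A * CF with hWdef
  have hW1 : W * W⁻¹ = 1 := Matrix.mul_nonsing_inv _ ((Matrix.isUnit_iff_isUnit_det _).mp hinv)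
  set Cr := Emat n * CF with hCr
  have hS : BF * Crᵀ * R⁻¹ * Cr = 1 - W := by
    have h : BF * Crᵀ * R⁻¹ * Cr = BF * CFᵀ * A * CF := by
      rw [hCr, hA, Matrix.transpose_mul]
      simp only [Matrix.mul_assoc]
    rw [h, hWdef, sub_sub_cancel]
  have hAmF : AmFmat src tgt b F = (Emat n)ᵀ * (R - Cr * BF * Crᵀ)⁻¹ * Emat n := by
    have h1 : AmFmat src tgt b F = (Emat n)ᵀ *
        ((CmFmat src tgt F * BmFmat b F * (CmFmat src tgt F)ᵀ).submatrix
          Fin.castSucc Fin.castSucc)⁻¹ * Emat n := AmatL_eq _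
    have h2 : ((C * Matrix.diagonal b * Cᵀ - CF * BF * CFᵀ).submatrix
        Fin.castSucc Fin.castSucc) = R - Cr * BF * Crᵀ := by
      rw [← Emat_sandwich, Matrix.mul_sub, Matrix.sub_mul, Emat_sandwich, ← hRdef]
      congr 1
      rw [hCr, Matrix.transpose_mul]
      simp only [Matrix.mul_assoc]
    rw [h1, LmF_split src tgt b F, ← hCdef, ← hCFdef, ← hBFdef, h2]
  rw [hAmF, woodbury_core R Cr BF W hR1 hW1 hS, hA, hCr, Matrix.transpose_mul]
  simp only [Matrix.mul_add, Matrix.add_mul, Matrix.mul_assoc]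
end
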